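/- If D : S → M is a Jordan (δ,f)-derivation on a 2-torsion-free bimodule M, then D(xyz + zyx) = D(x)yz + D(z)yx + f(x)δ(y)z + f(z)δ(y)x + f(x)yδ(z) + f(z)yδ(x) for all x, y, z ∈ S. -/
import Mathlib


open MulOpposite

/-- For a Jordan `(δ,f)`-derivation `D` on a `2`-torsion-free bimodule `M`,
`D(xyz + zyx) = D(x)yz + D(z)yx + f(x)δ(y)z + f(z)δ(y)x + f(x)yδ(z) + f(z)yδ(x)`. -/
theorem jordan_derivation_xyz
    {R S M : Type*} [CommRing R] [Ring S] [Algebra R S]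
    [AddCommGroup M] [Module S M] [Module Sᵐᵒᵖ M] [SMulCommClass S Sᵐᵒᵖ M]
    (htf : ∀ m : M, 2 • m = 0 → m = 0)
    (δ : S → S) (hδadd : ∀ a b : S, δ (a + b) = δ a + δ b)
    (hδmul : ∀ a b : S, δ (a * b) = δ a * b + a * δ b)
    (f : S → M) (hfadd : ∀ a b : S, f (a + b) = f a + f b)
    (hfleft : ∀ a x : S, f (a * x) = a • f x)
    (hfright : ∀ x a : S, f (x * a) = op a • f x)
    (D : S → M) (hDadd : ∀ a b : S, D (a + b) = D a + D b)
    (hJordan : ∀ x : S, D (x * x) = op x • D x + op (δ x) • f x) :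
    ∀ x y z : S, D (x * y * z + z * y * x) =
      op z • (op y • D x) + op x • (op y • D z) +
      op z • (op (δ y) • f x) + op x • (op (δ y) • f z) +
      op (δ z) • (op y • f x) + op (δ x) • (op y • f z) := by
  -- Step 1: polarization of the Jordan identity
  have polar : ∀ a b : S, D (a * b + b * a) =
      op b • D a + op a • D b + op (δ b) • f a + op (δ a) • f b := by
    intro a b
    have h1 : D (a * a) + (D (a * b + b * a) + D (b * b)) = D ((a + b) * (a + b)) := by
      rw [← hDadd, ← hDadd]; congr 1; noncomm_ring
    have h2 : D (a * b + b * a) = D ((a + b) * (a + b)) - D (a * a) - D (b * b) := by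
      rw [← h1]; abel
    rw [hJordan, hJordan, hJordan, hδadd, hfadd, hDadd a b] at h2
    rw [h2]
    simp only [op_add, add_smul, smul_add]
    abel
  -- Step 2: the formula for D (a * b * a)
  have cube : ∀ a b : S, D (a * b * a) =
      op a • (op b • D a) + op a • (op (δ b) • f a) + op (δ a) • (op b • f a) := by
    intro a b
    have h1 : D (a * b * a) + D (a * b * a) + D ((a * a) * b + b * (a * a)) =
        D (a * (a * b + b * a) + (a * b + b * a) * a) := by
      rw [← hDadd, ← hDadd]; congr 1; noncomm_ring
    refine sub_eq_zero.mp (htf _ ?_)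
    have h2 : (2 : ℕ) • (D (a * b * a) -
        (op a • (op b • D a) + op a • (op (δ b) • f a) + op (δ a) • (op b • f a))) =
        D (a * b * a) + D (a * b * a) + D ((a * a) * b + b * (a * a)) -
        ((op a • (op b • D a) + op a • (op (δ b) • f a) + op (δ a) • (op b • f a)) +
         (op a • (op b • D a) + op a • (op (δ b) • f a) + op (δ a) • (op b • f a)) +
         D ((a * a) * b + b * (a * a))) := by
      rw [two_smul]; abel
    rw [h2, h1, sub_eq_zero]
    rw [polar a (a * b + b * a), polar (a * a) b, polar a b, hJordan a,
        hδadd, hδmul, hδmul, hδmul, hfadd, hfright b a, hfright a b, hfright a a]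
    simp only [op_add, op_mul, add_smul, smul_add, mul_smul]
    abel
  -- Step 3: polarize the cube formula
  intro x y z
  have h1 : D (x * y * z + z * y * x) + D (x * y * x) + D (z * y * z) =
      D ((x + z) * y * (x + z)) := by
    rw [← hDadd, ← hDadd]; congr 1; noncomm_ring
  have h2 : D (x * y * z + z * y * x) =
      D ((x + z) * y * (x + z)) - D (x * y * x) - D (z * y * z) := by
    rw [← h1]; abel
  rw [cube, cube, cube, hδadd, hDadd x z, hfadd] at h2
  rw [h2]
  simp only [op_add, add_smul, smul_add]
  abel
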